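/- The stationary full-state probability φ(m) = (α₀α^{m-1}/β^m)/(1+(α₀/β)Σ_{l=0}^{m-1}(α/β)^l) is strictly decreasing in β (for fixed α₀, α > 0 and m ≥ 1). -/

import Mathlib

open Finset

theorem stmt7 (m : ℕ) (hm : 1 ≤ m) (α₀ α : ℝ) (hα₀ : 0 < α₀) (hα : 0 < α) :
    StrictAntiOn
      (fun β : ℝ => (α₀ * α^(m-1) / β^m) / (1 + (α₀/β) * ∑ l ∈ range m, (α/β)^l))
      (Set.Ioc 0 1) := by
  have key : ∀ β : ℝ, 0 < β →
      (α₀ * α^(m-1) / β^m) / (1 + (α₀/β) * ∑ l ∈ range m, (α/β)^l)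
      = (α₀ * α^(m-1)) / (β^m + α₀ * ∑ l ∈ range m, α^l * β^(m-1-l)) := by
    intro β hβ
    have hβ0 : β ≠ 0 := hβ.ne'
    have hβm : (β:ℝ)^m ≠ 0 := pow_ne_zero _ hβ0
    have hterm : ∀ l ∈ range m, β^(m-1) * (α/β)^l = α^l * β^(m-1-l) := by
      intro l hl
      have hl' : l ≤ m - 1 := Nat.le_sub_one_of_lt (mem_range.mp hl)
      rw [div_pow, ← Nat.sub_add_cancel hl', pow_add]
      rw [Nat.add_sub_cancel]
      field_simp
    have hsum : β^m * ((α₀/β) * ∑ l ∈ range m, (α/β)^l)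
        = α₀ * ∑ l ∈ range m, α^l * β^(m-1-l) := by
      have hpm : β^m = β^(m-1) * β := by
        rw [← pow_succ, Nat.sub_add_cancel hm]
      rw [hpm, ← Finset.sum_congr rfl hterm, Finset.mul_sum, Finset.mul_sum,
        Finset.mul_sum]
      apply Finset.sum_congr rfl
      intro l _
      field_simp
    rw [div_div, mul_add, mul_one, hsum]
  intro x hx y hy hxy
  simp only
  rw [key x hx.1, key y hy.1]
  have hC : 0 < α₀ * α^(m-1) := by positivity
  have hDx : 0 < x^m + α₀ * ∑ l ∈ range m, α^l * x^(m-1-l) := by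
    have : 0 ≤ ∑ l ∈ range m, α^l * x^(m-1-l) :=
      Finset.sum_nonneg fun l _ => mul_nonneg (pow_nonneg hα.le l) (pow_nonneg hx.1.le _)
    nlinarith [pow_pos hx.1 m]
  have hD : x^m + α₀ * ∑ l ∈ range m, α^l * x^(m-1-l)
      < y^m + α₀ * ∑ l ∈ range m, α^l * y^(m-1-l) := by
    have h1 : x^m < y^m := pow_lt_pow_left₀ hxy hx.1.le (by omega)
    have h2 : ∑ l ∈ range m, α^l * x^(m-1-l) ≤ ∑ l ∈ range m, α^l * y^(m-1-l) := by
      apply Finset.sum_le_sum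
      intro l _
      have := pow_le_pow_left₀ hx.1.le hxy.le (m-1-l)
      nlinarith [pow_pos hα l]
    nlinarith
  exact div_lt_div_of_pos_left hC hDx hD
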